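/- Let (Σ, T, μ) be a shift system with α-mixing coefficients α(·), n an integer, and A ∈ ℱ_0^{n-1}. Write H(k) = μ(τ_A > k). Then for every integer s > 2n with μ(τ_A ≤ s − 2n) > 0 and every positive integer q, |H(qs) − H(s − 2n)^q| ≤ (μ(τ_A ≤ 2n) + α(n)) / μ(τ_A ≤ s − 2n). -/
import Mathlib


open MeasureTheory Filter Set
open scoped ENNReal Topology

noncomputable section

/-- First hitting time (at time ≥ 1) of the set `A` under `T`, valued in `ℕ∞`. -/
def hitTime {X : Type*} (T : X → X) (A : Set X) (x : X) : ℕ∞ :=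
  ⨅ k ∈ {k : ℕ | 1 ≤ k ∧ T^[k] x ∈ A}, (k : ℕ∞)

/-- The shift map on one-sided sequences. -/
def shift (𝒜 : Type*) : (ℕ → 𝒜) → (ℕ → 𝒜) := fun x n => x (n + 1)

/-- The σ-algebra `ℱ_m^n` generated by the coordinates `m, …, n`. -/
def coordSigma (𝒜 : Type*) [m𝒜 : MeasurableSpace 𝒜] (m n : ℕ) :
    MeasurableSpace (ℕ → 𝒜) :=
  ⨆ i ∈ Set.Icc m n, m𝒜.comap (fun x => x i)

/-- The α-mixing coefficient `α(g)`. -/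
def alphaMix {𝒜 : Type*} [MeasurableSpace 𝒜] (μ : Measure (ℕ → 𝒜)) (g : ℕ) : ℝ :=
  ⨆ m : ℕ, ⨆ n : ℕ,
    ⨆ A : {A : Set (ℕ → 𝒜) // MeasurableSet[coordSigma 𝒜 0 n] A},
      ⨆ B : {B : Set (ℕ → 𝒜) // MeasurableSet[coordSigma 𝒜 (n + g) (m + g)] B},
        |(μ ((A : Set (ℕ → 𝒜)) ∩ B)).toReal - (μ A).toReal * (μ B).toReal|


set_option linter.unusedSectionVars false
set_option linter.unusedVariables false

section Aux
variable {𝒜 : Type*} [MeasurableSpace 𝒜]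

lemma shift_iterate_apply (j : ℕ) (x : ℕ → 𝒜) (i : ℕ) : (shift 𝒜)^[j] x i = x (i + j) := by
  induction j generalizing x with
  | zero => rfl
  | succ j ih =>
    rw [Function.iterate_succ_apply, ih]
    rfl

lemma coordSigma_mono {a b a' b' : ℕ} (h1 : a' ≤ a) (h2 : b ≤ b') :
    coordSigma 𝒜 a b ≤ coordSigma 𝒜 a' b' := by
  refine iSup₂_le fun i hi => ?_
  exact le_iSup₂ (f := fun i (_ : i ∈ Set.Icc a' b') => MeasurableSpace.comap (fun x : ℕ → 𝒜 => x i) ‹MeasurableSpace 𝒜›) i ⟨le_trans h1 hi.1, le_trans hi.2 h2⟩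

lemma coordSigma_le_pi {a b : ℕ} : coordSigma 𝒜 a b ≤ MeasurableSpace.pi := by
  refine iSup₂_le fun i _ => ?_
  exact (measurable_pi_apply i).comap_le

lemma measurable_shift : Measurable (shift 𝒜) :=
  measurable_pi_lambda _ fun i => measurable_pi_apply (i + 1)

lemma measurable_shift_iterate_coord (j c : ℕ) :
    @Measurable _ _ (coordSigma 𝒜 j (j + c)) (coordSigma 𝒜 0 c) ((shift 𝒜)^[j]) := by
  rw [measurable_iff_comap_le, coordSigma, MeasurableSpace.comap_iSup]
  refine iSup_le fun i => ?_
  rw [MeasurableSpace.comap_iSup]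
  refine iSup_le fun hi => ?_
  rw [MeasurableSpace.comap_comp]
  have he : ((fun x : ℕ → 𝒜 => x i) ∘ (shift 𝒜)^[j]) = fun x : ℕ → 𝒜 => x (i + j) :=
    funext fun x => shift_iterate_apply j x i
  rw [he]
  obtain ⟨-, hi2⟩ := hi
  exact le_iSup₂ (f := fun i (_ : i ∈ Set.Icc j (j + c)) => MeasurableSpace.comap (fun x : ℕ → 𝒜 => x i) ‹MeasurableSpace 𝒜›) (i + j) ⟨Nat.le_add_left _ _, by omega⟩

lemma preimage_iterate_coordSigma {A : Set (ℕ → 𝒜)} {c : ℕ}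
    (hA : MeasurableSet[coordSigma 𝒜 0 c] A) (j : ℕ) :
    MeasurableSet[coordSigma 𝒜 j (j + c)] ((shift 𝒜)^[j] ⁻¹' A) :=
  measurable_shift_iterate_coord j c hA

/-- No entry to `A` at times `a, …, b`. -/
def Ev (A : Set (ℕ → 𝒜)) (a b : ℕ) : Set (ℕ → 𝒜) :=
  ⋂ j ∈ Set.Icc a b, (shift 𝒜)^[j] ⁻¹' Aᶜ

lemma mem_Ev {A : Set (ℕ → 𝒜)} {a b : ℕ} {x : ℕ → 𝒜} :
    x ∈ Ev A a b ↔ ∀ j, a ≤ j → j ≤ b → (shift 𝒜)^[j] x ∉ A := by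
  simp [Ev]

lemma Ev_empty {A : Set (ℕ → 𝒜)} {a b : ℕ} (h : b < a) : Ev A a b = univ := by
  ext x; simp only [mem_Ev, mem_univ, iff_true]
  intro j h1 h2; omega

lemma Ev_meas_coord {A : Set (ℕ → 𝒜)} {c : ℕ} (hA : MeasurableSet[coordSigma 𝒜 0 c] A)
    {a b a' : ℕ} (ha : a' ≤ a) :
    MeasurableSet[coordSigma 𝒜 a' (b + c)] (Ev A a b) := by
  refine MeasurableSet.biInter (Set.to_countable _) fun j hj => ?_
  have h1 : MeasurableSet[coordSigma 𝒜 j (j + c)] ((shift 𝒜)^[j] ⁻¹' Aᶜ) :=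
    preimage_iterate_coordSigma hA.compl j
  exact coordSigma_mono (le_trans ha hj.1) (by have := hj.2; omega) _ h1

lemma Ev_meas {A : Set (ℕ → 𝒜)} {c : ℕ} (hA : MeasurableSet[coordSigma 𝒜 0 c] A)
    (a b : ℕ) : MeasurableSet (Ev A a b) :=
  coordSigma_le_pi _ (Ev_meas_coord hA (le_refl a))

lemma Ev_preimage {A : Set (ℕ → 𝒜)} (a b t : ℕ) :
    (shift 𝒜)^[t] ⁻¹' (Ev A a b) = Ev A (a + t) (b + t) := by
  ext x
  simp only [mem_preimage, mem_Ev]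
  constructor
  · intro h j h1 h2
    have := h (j - t) (by omega) (by omega)
    rwa [← Function.iterate_add_apply, Nat.sub_add_cancel (by omega)] at this
  · intro h j h1 h2
    rw [← Function.iterate_add_apply]
    exact h (j + t) (by omega) (by omega)

lemma Ev_split {A : Set (ℕ → 𝒜)} {a b c : ℕ} (h1 : a ≤ c + 1) (h2 : c ≤ b) :
    Ev A a b = Ev A a c ∩ Ev A (c + 1) b := by
  ext x
  simp only [mem_Ev, mem_inter_iff]
  constructor
  · exact fun h => ⟨fun j j1 j2 => h j j1 (by omega), fun j j1 j2 => h j (by omega) j2⟩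
  · rintro ⟨u, v⟩ j j1 j2
    rcases le_or_gt j c with hj | hj
    · exact u j j1 hj
    · exact v j (by omega) j2

lemma lt_hitTime_iff {A : Set (ℕ → 𝒜)} {m : ℕ} {x : ℕ → 𝒜} :
    ((m : ℕ∞) < hitTime (shift 𝒜) A x) ↔ x ∈ Ev A 1 m := by
  constructor
  · intro h
    rw [mem_Ev]
    intro j h1 h2 hj
    have : hitTime (shift 𝒜) A x ≤ (j : ℕ∞) :=
      iInf₂_le (α := ℕ∞) j ⟨h1, hj⟩
    exact absurd (lt_of_lt_of_le h this) (by exact_mod_cast not_lt.2 h2)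
  · intro h
    have h1 : ((m + 1 : ℕ) : ℕ∞) ≤ hitTime (shift 𝒜) A x := by
      refine le_iInf₂ fun k hk => ?_
      rcases hk with ⟨hk1, hk2⟩
      have : ¬ k ≤ m := fun hle => (mem_Ev.1 h) k hk1 hle hk2
      exact_mod_cast by omega
    calc (m : ℕ∞) < ((m + 1 : ℕ) : ℕ∞) := by exact_mod_cast Nat.lt_succ_self m
    _ ≤ _ := h1

lemma hitTime_set_eq {A : Set (ℕ → 𝒜)} {m : ℕ} :
    {x : ℕ → 𝒜 | (m : ℕ∞) < hitTime (shift 𝒜) A x} = Ev A 1 m := by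
  ext x; exact lt_hitTime_iff

lemma hitTime_le_set_eq {A : Set (ℕ → 𝒜)} {m : ℕ} :
    {x : ℕ → 𝒜 | hitTime (shift 𝒜) A x ≤ (m : ℕ∞)} = (Ev A 1 m)ᶜ := by
  ext x
  simp only [mem_setOf_eq, mem_compl_iff, ← lt_hitTime_iff, not_lt]


variable (μ : Measure (ℕ → 𝒜)) [IsProbabilityMeasure μ]

lemma toReal_prob_le_one (X : Set (ℕ → 𝒜)) : (μ X).toReal ≤ 1 := by
  have h := ENNReal.toReal_mono (by simp) (prob_le_one (μ := μ) (s := X))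
  simpa using h

lemma corr_term_le_one (X Y : Set (ℕ → 𝒜)) :
    |(μ (X ∩ Y)).toReal - (μ X).toReal * (μ Y).toReal| ≤ 1 := by
  have h1 := toReal_prob_le_one μ (X ∩ Y)
  have h2 := toReal_prob_le_one μ X
  have h3 := toReal_prob_le_one μ Y
  have p1 : 0 ≤ (μ (X ∩ Y)).toReal := ENNReal.toReal_nonneg
  have p2 : 0 ≤ (μ X).toReal := ENNReal.toReal_nonneg
  have p3 : 0 ≤ (μ Y).toReal := ENNReal.toReal_nonneg
  rw [abs_le]
  constructor <;> nlinarith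

lemma alphaMix_nonneg (g : ℕ) : 0 ≤ alphaMix μ g :=
  Real.iSup_nonneg fun _ => Real.iSup_nonneg fun _ =>
    Real.iSup_nonneg fun _ => Real.iSup_nonneg fun _ => abs_nonneg _

lemma corr_le_alphaMix (g N M : ℕ) (A' B' : Set (ℕ → 𝒜))
    (hA' : MeasurableSet[coordSigma 𝒜 0 N] A')
    (hB' : MeasurableSet[coordSigma 𝒜 (N + g) (M + g)] B') :
    |(μ (A' ∩ B')).toReal - (μ A').toReal * (μ B').toReal| ≤ alphaMix μ g := by
  unfold alphaMix
  refine le_ciSup_of_le ?_ M ?_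
  · refine ⟨1, ?_⟩
    rintro y ⟨m, rfl⟩
    exact Real.iSup_le (fun n => Real.iSup_le (fun A => Real.iSup_le
      (fun B => corr_term_le_one μ _ _) zero_le_one) zero_le_one) zero_le_one
  refine le_ciSup_of_le ?_ N ?_
  · refine ⟨1, ?_⟩
    rintro y ⟨n, rfl⟩
    exact Real.iSup_le (fun A => Real.iSup_le
      (fun B => corr_term_le_one μ _ _) zero_le_one) zero_le_one
  refine le_ciSup_of_le ?_ ⟨A', hA'⟩ ?_
  · refine ⟨1, ?_⟩
    rintro y ⟨A, rfl⟩
    exact Real.iSup_le (fun B => corr_term_le_one μ _ _) zero_le_one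
  exact le_ciSup (f := fun B : {B : Set (ℕ → 𝒜) // MeasurableSet[coordSigma 𝒜 (N + g) (M + g)] B} =>
      |(μ (A' ∩ (B : Set (ℕ → 𝒜)))).toReal - (μ A').toReal * (μ (B : Set (ℕ → 𝒜))).toReal|)
    (⟨1, by
      rintro y ⟨B, rfl⟩
      exact corr_term_le_one μ _ _⟩) ⟨B', hB'⟩


lemma compl_toReal {X : Set (ℕ → 𝒜)} (hX : MeasurableSet X) :
    (μ Xᶜ).toReal = 1 - (μ X).toReal := by
  rw [measure_compl hX (measure_ne_top μ X), measure_univ,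
    ENNReal.toReal_sub_of_le prob_le_one ENNReal.one_ne_top, ENNReal.toReal_one]

lemma Ev_measure_shift (hT : MeasurePreserving (shift 𝒜) μ μ) {A : Set (ℕ → 𝒜)} {c : ℕ}
    (hA : MeasurableSet[coordSigma 𝒜 0 c] A) (a b t : ℕ) :
    μ (Ev A (a + t) (b + t)) = μ (Ev A a b) := by
  rw [← Ev_preimage]
  exact (hT.iterate t).measure_preimage (Ev_meas hA a b).nullMeasurableSet

lemma step_estimate (hT : MeasurePreserving (shift 𝒜) μ μ) {A : Set (ℕ → 𝒜)} {n : ℕ}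
    (hAmeas : MeasurableSet[coordSigma 𝒜 0 (n - 1)] A) {s : ℕ} (hs : 2 * n < s) (t : ℕ) :
    |(μ (Ev A 1 (t + s))).toReal -
      (μ (Ev A 1 t)).toReal * (μ (Ev A 1 (s - 2 * n))).toReal| ≤
    (μ ((Ev A 1 (2 * n))ᶜ)).toReal + alphaMix μ n := by
  set B : Set (ℕ → 𝒜) := Ev A (t + 2 * n + 1) (t + s) with hB
  have hfin : ∀ X : Set (ℕ → 𝒜), μ X ≠ ⊤ := fun X => measure_ne_top μ X
  -- split
  have hsplit : Ev A 1 (t + s) = (Ev A 1 t ∩ B) ∩ Ev A (t + 1) (t + 2 * n) := by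
    rw [Ev_split (A := A) (a := 1) (b := t + s) (c := t) (by omega) (by omega),
      Ev_split (A := A) (a := t + 1) (b := t + s) (c := t + 2 * n) (by omega) (by omega)]
    ext x; simp only [mem_inter_iff]; tauto
  -- measure of B
  have hBmeasure : μ B = μ (Ev A 1 (s - 2 * n)) := by
    have e1 : t + 2 * n + 1 = 1 + (t + 2 * n) := by omega
    have e2 : t + s = (s - 2 * n) + (t + 2 * n) := by omega
    rw [hB, e1, e2, Ev_measure_shift μ hT hAmeas]
  -- first comparison
  have h1 : |(μ (Ev A 1 (t + s))).toReal - (μ (Ev A 1 t ∩ B)).toReal| ≤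
      (μ ((Ev A 1 (2 * n))ᶜ)).toReal := by
    have hYX : Ev A 1 (t + s) ⊆ Ev A 1 t ∩ B := by rw [hsplit]; exact inter_subset_left
    have hZ : μ ((Ev A (t + 1) (t + 2 * n))ᶜ) = μ ((Ev A 1 (2 * n))ᶜ) := by
      have e1 : t + 1 = 1 + t := by omega
      have e2 : t + 2 * n = 2 * n + t := by omega
      rw [e1, e2, ← Ev_preimage, ← preimage_compl]
      exact (hT.iterate t).measure_preimage (Ev_meas hAmeas 1 (2 * n)).compl.nullMeasurableSet
    have hXYZ : Ev A 1 t ∩ B ⊆ Ev A 1 (t + s) ∪ (Ev A (t + 1) (t + 2 * n))ᶜ := by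
      intro x hx
      by_cases hx2 : x ∈ Ev A (t + 1) (t + 2 * n)
      · exact Or.inl (by rw [hsplit]; exact ⟨hx, hx2⟩)
      · exact Or.inr hx2
    have hle1 : (μ (Ev A 1 (t + s))).toReal ≤ (μ (Ev A 1 t ∩ B)).toReal :=
      ENNReal.toReal_mono (hfin _) (measure_mono hYX)
    have hle2 : (μ (Ev A 1 t ∩ B)).toReal ≤ (μ (Ev A 1 (t + s))).toReal +
        (μ ((Ev A (t + 1) (t + 2 * n))ᶜ)).toReal := by
      have h := (measure_mono (μ := μ) hXYZ).trans (measure_union_le _ _)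
      calc (μ (Ev A 1 t ∩ B)).toReal
          ≤ (μ (Ev A 1 (t + s)) + μ ((Ev A (t + 1) (t + 2 * n))ᶜ)).toReal :=
            ENNReal.toReal_mono (by simp [hfin, ENNReal.add_ne_top]) h
        _ = _ := ENNReal.toReal_add (hfin _) (hfin _)
    rw [hZ] at hle2
    rw [abs_le]
    constructor <;> [linarith; linarith [ENNReal.toReal_nonneg (a := μ ((Ev A 1 (2 * n))ᶜ))]]
  -- mixing comparison
  have h2 : |(μ (Ev A 1 t ∩ B)).toReal - (μ (Ev A 1 t)).toReal * (μ B).toReal| ≤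
      alphaMix μ n := by
    refine corr_le_alphaMix μ n (t + n) (t + s) _ _ ?_ ?_
    · have h := Ev_meas_coord hAmeas (a := 1) (b := t) (a' := 0) (by omega)
      exact coordSigma_mono (le_refl 0) (by omega) _ h
    · have h := Ev_meas_coord hAmeas (a := t + 2 * n + 1) (b := t + s) (a' := t + 2 * n)
        (by omega)
      exact coordSigma_mono (by omega) (by omega) _ h
  rw [hBmeasure] at h2
  calc |(μ (Ev A 1 (t + s))).toReal -
      (μ (Ev A 1 t)).toReal * (μ (Ev A 1 (s - 2 * n))).toReal|
      ≤ |(μ (Ev A 1 (t + s))).toReal - (μ (Ev A 1 t ∩ B)).toReal| +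
        |(μ (Ev A 1 t ∩ B)).toReal -
          (μ (Ev A 1 t)).toReal * (μ (Ev A 1 (s - 2 * n))).toReal| := abs_sub_le _ _ _
    _ ≤ _ := add_le_add h1 h2

end Aux

/-- **Tail of the hitting time along multiples of `s` versus `q`-th powers.**
For a shift system with α-mixing coefficients `α(·)`, `A ∈ ℱ_0^{n-1}`, every integer
`s > 2n` with `μ(τ_A ≤ s−2n) > 0` and every `q ≥ 1`,
`|H(qs) − H(s−2n)^q| ≤ (μ(τ_A ≤ 2n) + α(n)) / μ(τ_A ≤ s−2n)`, where `H(k) = μ(τ_A > k)`. -/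
theorem tail_power_estimate
    {𝒜 : Type*} [Countable 𝒜] [MeasurableSpace 𝒜] [DiscreteMeasurableSpace 𝒜]
    (μ : Measure (ℕ → 𝒜)) [IsProbabilityMeasure μ]
    (hT : MeasurePreserving (shift 𝒜) μ μ)
    (n : ℕ) (A : Set (ℕ → 𝒜))
    (hAmeas : MeasurableSet[coordSigma 𝒜 0 (n - 1)] A)
    (s : ℕ) (hs : 2 * n < s)
    (hpos : 0 < (μ {x | hitTime (shift 𝒜) A x ≤ ((s - 2 * n : ℕ) : ℕ∞)}).toReal)
    (q : ℕ) (hq : 1 ≤ q) :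
    |(μ {x | ((q * s : ℕ) : ℕ∞) < hitTime (shift 𝒜) A x}).toReal -
        (μ {x | ((s - 2 * n : ℕ) : ℕ∞) < hitTime (shift 𝒜) A x}).toReal ^ q| ≤
      ((μ {x | hitTime (shift 𝒜) A x ≤ ((2 * n : ℕ) : ℕ∞)}).toReal + alphaMix μ n) /
        (μ {x | hitTime (shift 𝒜) A x ≤ ((s - 2 * n : ℕ) : ℕ∞)}).toReal := by
  rw [hitTime_set_eq, hitTime_set_eq, hitTime_le_set_eq, hitTime_le_set_eq]
  rw [hitTime_le_set_eq] at hpos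
  set h : ℝ := (μ (Ev A 1 (s - 2 * n))).toReal with hh
  set ε : ℝ := (μ ((Ev A 1 (2 * n))ᶜ)).toReal + alphaMix μ n with hε
  set p : ℝ := (μ ((Ev A 1 (s - 2 * n))ᶜ)).toReal with hp0
  have h0 : 0 ≤ h := ENNReal.toReal_nonneg
  have hp : p = 1 - h := compl_toReal μ (Ev_meas hAmeas _ _)
  have hppos : 0 < p := hpos
  have hlt : h < 1 := by linarith [hp ▸ hppos]
  have ε0 : 0 ≤ ε := add_nonneg ENNReal.toReal_nonneg (alphaMix_nonneg μ n)
  have main : ∀ k : ℕ, |(μ (Ev A 1 (k * s))).toReal - h ^ k| ≤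
      ε * ∑ j ∈ Finset.range k, h ^ j := by
    intro k
    induction k with
    | zero => simp [Ev_empty (show (0:ℕ) < 1 by omega)]
    | succ k ih =>
      have hstep := step_estimate μ hT hAmeas hs (k * s)
      have e : (k + 1) * s = k * s + s := by ring
      rw [e]
      calc |(μ (Ev A 1 (k * s + s))).toReal - h ^ (k + 1)|
          ≤ |(μ (Ev A 1 (k * s + s))).toReal - (μ (Ev A 1 (k * s))).toReal * h| +
            |(μ (Ev A 1 (k * s))).toReal * h - h ^ k * h| := by
              rw [pow_succ]; exact abs_sub_le _ _ _
        _ ≤ ε + h * (ε * ∑ j ∈ Finset.range k, h ^ j) := by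
              refine add_le_add hstep ?_
              rw [show (μ (Ev A 1 (k * s))).toReal * h - h ^ k * h =
                ((μ (Ev A 1 (k * s))).toReal - h ^ k) * h by ring, abs_mul, abs_of_nonneg h0]
              calc |(μ (Ev A 1 (k * s))).toReal - h ^ k| * h
                  ≤ (ε * ∑ j ∈ Finset.range k, h ^ j) * h :=
                    mul_le_mul_of_nonneg_right ih h0
                _ = h * (ε * ∑ j ∈ Finset.range k, h ^ j) := by ring
        _ = ε * ∑ j ∈ Finset.range (k + 1), h ^ j := by
              rw [geom_sum_succ]; ring
  have key : (1 - h) * ∑ j ∈ Finset.range q, h ^ j = 1 - h ^ q := by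
    have g := geom_sum_mul h q
    linear_combination -g
  have hsum : ∑ j ∈ Finset.range q, h ^ j ≤ 1 / (1 - h) := by
    rw [le_div_iff₀ (by linarith)]
    nlinarith [pow_nonneg h0 q]
  calc |(μ (Ev A 1 (q * s))).toReal - h ^ q|
      ≤ ε * ∑ j ∈ Finset.range q, h ^ j := main q
    _ ≤ ε * (1 / (1 - h)) := mul_le_mul_of_nonneg_left hsum ε0
    _ = ε / p := by rw [hp]; ring
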